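/- Let X₁, X₂, X₃ ∈ SL(2,ℂ) with Y = X₂X₁⁻¹, tr(Y) = s, tr(X₁) = tr(X₂) = t. Set α = ω_{k-1}(s), β = ω_k(s), γ = ω_{k+1}(s) for the Chebyshev-like sequence ω. Then Y^k·X₂ = γ·X₂ - β·X₁ and Y^{-k}·X₁ = γ·X₁ - β·X₂. -/

import Mathlib

open Matrix

lemma sl2_key (Y : Matrix.SpecialLinearGroup (Fin 2) ℂ) (s : ℂ)
    (hs : (Y : Matrix (Fin 2) (Fin 2) ℂ).trace = s) :
    ((Y : Matrix (Fin 2) (Fin 2) ℂ) + ((Y⁻¹ : Matrix.SpecialLinearGroup (Fin 2) ℂ) : Matrix (Fin 2) (Fin 2) ℂ)) = s • 1 := by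
  rw [Matrix.SpecialLinearGroup.coe_inv, Matrix.adjugate_fin_two]
  rw [Matrix.trace_fin_two] at hs
  ext i j
  fin_cases i <;> fin_cases j <;>
    simp [Matrix.one_apply] <;> linear_combination hs

lemma sl2_step (Y Z : Matrix.SpecialLinearGroup (Fin 2) ℂ) (s : ℂ)
    (hs : (Y : Matrix (Fin 2) (Fin 2) ℂ).trace = s) (k : ℤ) :
    ((Y ^ (k+1) * Z : Matrix.SpecialLinearGroup (Fin 2) ℂ) : Matrix (Fin 2) (Fin 2) ℂ)
      + ((Y ^ (k-1) * Z : Matrix.SpecialLinearGroup (Fin 2) ℂ) : Matrix (Fin 2) (Fin 2) ℂ)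
    = s • ((Y ^ k * Z : Matrix.SpecialLinearGroup (Fin 2) ℂ) : Matrix (Fin 2) (Fin 2) ℂ) := by
  have e1 : Y ^ (k+1) * Z = Y * (Y ^ k * Z) := by
    rw [← mul_assoc, ← _root_.zpow_one_add]; ring_nf
  have e2 : Y ^ (k-1) * Z = Y⁻¹ * (Y ^ k * Z) := by
    rw [← mul_assoc, ← _root_.zpow_neg_one, ← _root_.zpow_add]; ring_nf
  rw [e1, e2]
  simp only [Matrix.SpecialLinearGroup.coe_mul]
  rw [← add_mul, sl2_key Y s hs, smul_mul_assoc, one_mul]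

lemma cheb_seq {M : Type*} [AddCommGroup M] [Module ℂ M] (s : ℂ) (w : ℤ → ℂ)
    (hrec : ∀ j : ℤ, w (j + 1) = s * w j - w (j - 1))
    (u : ℤ → M) (hu : ∀ j : ℤ, u (j + 1) + u (j - 1) = s • u j)
    (A B : M) (h0 : u 0 = w 1 • A - w 0 • B) (h1 : u 1 = w 2 • A - w 1 • B) :
    ∀ k : ℤ, u k = w (k + 1) • A - w k • B := by
  have key : ∀ k : ℤ, u k = w (k + 1) • A - w k • B ∧
      u (k + 1) = w (k + 2) • A - w (k + 1) • B := by
    intro k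
    induction k using Int.induction_on with
    | zero => exact ⟨by norm_num; exact h0, by norm_num; exact h1⟩
    | succ i ih =>
        refine ⟨ih.2, ?_⟩
        rw [show ((i:ℤ)+1+1) = i+2 by ring, show ((i:ℤ)+1+2) = i+3 by ring]
        have e : u ((i:ℤ)+2) = s • u ((i:ℤ)+1) - u i := by
          have h := hu ((i:ℤ)+1)
          rw [show ((i:ℤ)+1+1) = i+2 by ring, show ((i:ℤ)+1-1) = i by ring] at h
          exact eq_sub_of_add_eq h
        have hw3 : w ((i:ℤ)+3) = s * w ((i:ℤ)+2) - w ((i:ℤ)+1) := by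
          have h := hrec ((i:ℤ)+2)
          rw [show ((i:ℤ)+2+1) = i+3 by ring, show ((i:ℤ)+2-1) = i+1 by ring] at h
          exact h
        have hw2' : w ((i:ℤ)+2) = s * w ((i:ℤ)+1) - w i := by
          have h := hrec ((i:ℤ)+1)
          rw [show ((i:ℤ)+1+1) = i+2 by ring, show ((i:ℤ)+1-1) = i by ring] at h
          exact h
        rw [e, ih.1, ih.2, hw3, hw2']
        module
    | pred i ih =>
        refine ⟨?_, by rw [show (-(i:ℤ)-1+1) = -i by ring, show (-(i:ℤ)-1+2) = -i+1 by ring]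
                       exact ih.1⟩
        rw [show (-(i:ℤ)-1+1) = -i by ring]
        have e : u (-(i:ℤ)-1) = s • u (-(i:ℤ)) - u (-(i:ℤ)+1) := by
          have h := hu (-(i:ℤ))
          rw [add_comm] at h
          exact eq_sub_of_add_eq h
        have hw' : w (-(i:ℤ)-1) = s * w (-(i:ℤ)) - w (-(i:ℤ)+1) := by
          linear_combination hrec (-(i:ℤ))
        have hw2' : w (-(i:ℤ)+2) = s * w (-(i:ℤ)+1) - w (-(i:ℤ)) := by
          have h := hrec (-(i:ℤ)+1)
          rw [show (-(i:ℤ)+1+1) = -i+2 by ring, show (-(i:ℤ)+1-1) = -i by ring] at h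
          exact h
        rw [e, ih.1, ih.2, hw', hw2']
        module
  exact fun k => (key k).1

theorem sl2_Yk_action (X₁ X₂ Y : Matrix.SpecialLinearGroup (Fin 2) ℂ)
    (hY : Y = X₂ * X₁⁻¹) (t s : ℂ)
    (h1 : (X₁ : Matrix (Fin 2) (Fin 2) ℂ).trace = t)
    (h2 : (X₂ : Matrix (Fin 2) (Fin 2) ℂ).trace = t)
    (hs : (Y : Matrix (Fin 2) (Fin 2) ℂ).trace = s)
    (w : ℤ → ℂ) (hw0 : w 0 = 0) (hw1 : w 1 = 1)
    (hrec : ∀ j : ℤ, w (j + 1) = s * w j - w (j - 1)) (k : ℤ) :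
    ((Y ^ k * X₂ : Matrix.SpecialLinearGroup (Fin 2) ℂ) : Matrix (Fin 2) (Fin 2) ℂ) =
        w (k + 1) • (X₂ : Matrix (Fin 2) (Fin 2) ℂ) - w k • (X₁ : Matrix (Fin 2) (Fin 2) ℂ) ∧
      ((Y ^ (-k) * X₁ : Matrix.SpecialLinearGroup (Fin 2) ℂ) : Matrix (Fin 2) (Fin 2) ℂ) =
        w (k + 1) • (X₁ : Matrix (Fin 2) (Fin 2) ℂ) - w k • (X₂ : Matrix (Fin 2) (Fin 2) ℂ) := by
  have hYX1 : Y * X₁ = X₂ := by rw [hY]; group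
  have hYiX2 : Y⁻¹ * X₂ = X₁ := by rw [hY]; group
  have hw2 : w 2 = s := by
    have h := hrec 1
    norm_num [hw0, hw1] at h
    exact h
  have hmul : ∀ Z : Matrix.SpecialLinearGroup (Fin 2) ℂ,
      ((Y : Matrix (Fin 2) (Fin 2) ℂ) * Z + ((Y⁻¹ : Matrix.SpecialLinearGroup (Fin 2) ℂ) : Matrix (Fin 2) (Fin 2) ℂ) * Z) = s • (Z : Matrix (Fin 2) (Fin 2) ℂ) := by
    intro Z
    rw [← add_mul, sl2_key Y s hs, smul_mul_assoc, one_mul]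
  constructor
  · refine cheb_seq s w hrec (fun j => ((Y ^ j * X₂ : Matrix.SpecialLinearGroup (Fin 2) ℂ) : Matrix (Fin 2) (Fin 2) ℂ))
      (fun j => sl2_step Y X₂ s hs j) _ _ ?_ ?_ k
    · show ((Y ^ (0:ℤ) * X₂ : Matrix.SpecialLinearGroup (Fin 2) ℂ) : Matrix (Fin 2) (Fin 2) ℂ) = _
      simp [hw0, hw1]
    · show ((Y ^ (1:ℤ) * X₂ : Matrix.SpecialLinearGroup (Fin 2) ℂ) : Matrix (Fin 2) (Fin 2) ℂ) = _
      rw [hw1, hw2, zpow_one, one_smul]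
      have h := hmul X₂
      rw [← Matrix.SpecialLinearGroup.coe_mul Y X₂, ← Matrix.SpecialLinearGroup.coe_mul Y⁻¹ X₂,
        hYiX2] at h
      exact eq_sub_of_add_eq h
  · refine cheb_seq s w hrec (fun j => ((Y ^ (-j) * X₁ : Matrix.SpecialLinearGroup (Fin 2) ℂ) : Matrix (Fin 2) (Fin 2) ℂ))
      ?_ _ _ ?_ ?_ k
    · intro j
      show ((Y ^ (-(j+1)) * X₁ : Matrix.SpecialLinearGroup (Fin 2) ℂ) : Matrix (Fin 2) (Fin 2) ℂ)
          + ((Y ^ (-(j-1)) * X₁ : Matrix.SpecialLinearGroup (Fin 2) ℂ) : Matrix (Fin 2) (Fin 2) ℂ)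
        = s • ((Y ^ (-j) * X₁ : Matrix.SpecialLinearGroup (Fin 2) ℂ) : Matrix (Fin 2) (Fin 2) ℂ)
      rw [show (-(j+1):ℤ) = -j-1 by ring, show (-(j-1):ℤ) = -j+1 by ring, add_comm]
      exact sl2_step Y X₁ s hs (-j)
    · show ((Y ^ (-(0:ℤ)) * X₁ : Matrix.SpecialLinearGroup (Fin 2) ℂ) : Matrix (Fin 2) (Fin 2) ℂ) = _
      simp [hw0, hw1]
    · show ((Y ^ (-(1:ℤ)) * X₁ : Matrix.SpecialLinearGroup (Fin 2) ℂ) : Matrix (Fin 2) (Fin 2) ℂ) = _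
      rw [hw1, hw2, one_smul, show (-(1:ℤ)) = -1 from rfl, _root_.zpow_neg_one]
      have h := hmul X₁
      rw [← Matrix.SpecialLinearGroup.coe_mul Y X₁, ← Matrix.SpecialLinearGroup.coe_mul Y⁻¹ X₁,
        hYX1, add_comm] at h
      exact eq_sub_of_add_eq h
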